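/- Sparse MAP characterization: let v ∈ ℝ^p and λ ≥ 0 be such that S_λ(v) ≠ 0, where S_λ is applied coordinate-wise. Then the maximizer over the unit sphere {β ∈ ℝ^p : ‖β‖₂ = 1} of the function β ↦ ⟨β, v⟩ − λ‖β‖₁ is β* = S_λ(v)/‖S_λ(v)‖₂. -/

import Mathlib

open scoped RealInnerProductSpace

/-- Soft-thresholding (shrinkage) operator `S_λ(x) = sign(x)(|x| − λ) 1{|x| > λ}`. -/
noncomputable def softThresh (lam x : ℝ) : ℝ :=
  Real.sign x * (|x| - lam) * (if lam < |x| then 1 else 0)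

lemma soft_key1 (lam x : ℝ) (hlam : 0 ≤ lam) :
    softThresh lam x * x - lam * |softThresh lam x| = (softThresh lam x) ^ 2 := by
  unfold softThresh
  rcases lt_trichotomy x 0 with h | h | h
  · rw [Real.sign_of_neg h, abs_of_neg h]
    by_cases hc : lam < -x
    · simp only [if_pos hc, mul_one]
      rw [show (-1 : ℝ) * (-x - lam) = x + lam by ring, abs_of_neg (by linarith)]
      ring
    · simp [hc]
  · simp [h]
  · rw [Real.sign_of_pos h, abs_of_pos h]
    by_cases hc : lam < x
    · simp only [if_pos hc, mul_one, one_mul]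
      rw [abs_of_nonneg (by linarith)]
      ring
    · simp [hc]

lemma soft_abs_le (lam x : ℝ) (hlam : 0 ≤ lam) : |x| - lam ≤ |softThresh lam x| := by
  unfold softThresh
  by_cases hc : lam < |x|
  · simp only [if_pos hc, mul_one, abs_mul]
    have hx : x ≠ 0 := by
      intro h
      rw [h, abs_zero] at hc
      linarith
    have hs : |Real.sign x| = 1 := by
      rcases hx.lt_or_gt with h | h
      · rw [Real.sign_of_neg h]; norm_num
      · rw [Real.sign_of_pos h]; norm_num
    rw [hs, one_mul]
    exact le_abs_self _
  · simp only [if_neg hc, mul_zero, abs_zero]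
    linarith [not_lt.mp hc]

lemma soft_key2 (lam x b : ℝ) (hlam : 0 ≤ lam) : b * x - lam * |b| ≤ |b| * |softThresh lam x| := by
  have h1 : b * x ≤ |b| * |x| := by
    calc b * x ≤ |b * x| := le_abs_self _
    _ = |b| * |x| := abs_mul b x
  have h2 : |x| - lam ≤ |softThresh lam x| := soft_abs_le lam x hlam
  nlinarith [abs_nonneg b]

theorem stmt6 {p : ℕ} (v : EuclideanSpace ℝ (Fin p)) (lam : ℝ) (hlam : 0 ≤ lam)
    (w : EuclideanSpace ℝ (Fin p)) (hw : ∀ j, w j = softThresh lam (v j)) (hw0 : w ≠ 0) :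
    ‖(‖w‖⁻¹ • w : EuclideanSpace ℝ (Fin p))‖ = 1 ∧
    ∀ β : EuclideanSpace ℝ (Fin p), ‖β‖ = 1 →
      ⟪β, v⟫ - lam * ∑ j, |β j| ≤ ⟪‖w‖⁻¹ • w, v⟫ - lam * ∑ j, |(‖w‖⁻¹ • w : EuclideanSpace ℝ (Fin p)) j| := by
  have hwpos : (0:ℝ) < ‖w‖ := norm_pos_iff.mpr hw0
  have hnorm1 : ‖(‖w‖⁻¹ • w : EuclideanSpace ℝ (Fin p))‖ = 1 := norm_smul_inv_norm hw0
  refine ⟨hnorm1, fun β hβ => ?_⟩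
  have hinner : ∀ (a b : EuclideanSpace ℝ (Fin p)), ⟪a, b⟫ = ∑ j, a j * b j := by
    intro a b
    simp [PiLp.inner_apply, RCLike.inner_apply, mul_comm]
  have hsmul : ∀ j, (‖w‖⁻¹ • w : EuclideanSpace ℝ (Fin p)) j = ‖w‖⁻¹ * w j := by
    intro j; simp
  -- value at β*
  have hwsq : ∑ j, (w j)^2 = ‖w‖^2 := by
    have := real_inner_self_eq_norm_sq w
    rw [hinner] at this
    simpa [pow_two] using this
  have hstar : ⟪(‖w‖⁻¹ • w : EuclideanSpace ℝ (Fin p)), v⟫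
      - lam * ∑ j, |(‖w‖⁻¹ • w : EuclideanSpace ℝ (Fin p)) j| = ‖w‖ := by
    rw [hinner]
    have h1 : ∑ j, (‖w‖⁻¹ • w : EuclideanSpace ℝ (Fin p)) j * v j
        = ‖w‖⁻¹ * ∑ j, w j * v j := by
      rw [Finset.mul_sum]; exact Finset.sum_congr rfl fun j _ => by rw [hsmul]; ring
    have h2 : ∑ j, |(‖w‖⁻¹ • w : EuclideanSpace ℝ (Fin p)) j|
        = ‖w‖⁻¹ * ∑ j, |w j| := by
      rw [Finset.mul_sum]
      exact Finset.sum_congr rfl fun j _ => by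
        rw [hsmul, abs_mul, abs_of_pos (inv_pos.mpr hwpos)]
    rw [h1, h2]
    have h3 : ∑ j, w j * v j - lam * ∑ j, |w j| = ∑ j, (w j)^2 := by
      rw [Finset.mul_sum, ← Finset.sum_sub_distrib]
      exact Finset.sum_congr rfl fun j _ => by
        rw [hw j]; exact soft_key1 lam (v j) hlam
    have : ‖w‖⁻¹ * (∑ j, w j * v j) - lam * (‖w‖⁻¹ * ∑ j, |w j|)
        = ‖w‖⁻¹ * (∑ j, w j * v j - lam * ∑ j, |w j|) := by ring
    rw [this, h3, hwsq]
    field_simp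
  rw [hstar]
  -- upper bound for general β
  rw [hinner]
  have step1 : ∑ j, β j * v j - lam * ∑ j, |β j| ≤ ∑ j, |β j| * |w j| := by
    rw [Finset.mul_sum, ← Finset.sum_sub_distrib]
    apply Finset.sum_le_sum
    intro j _
    rw [hw j]
    exact soft_key2 lam (v j) (β j) hlam
  have step2 : ∑ j, |β j| * |w j| ≤ ‖β‖ * ‖w‖ := by
    set βa : EuclideanSpace ℝ (Fin p) := WithLp.toLp 2 (fun j => |β j|) with hβa
    set wa : EuclideanSpace ℝ (Fin p) := WithLp.toLp 2 (fun j => |w j|) with hwa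
    have hβn : ‖βa‖ = ‖β‖ := by
      rw [EuclideanSpace.norm_eq, EuclideanSpace.norm_eq]
      congr 1
      exact Finset.sum_congr rfl fun j _ => by simp [hβa]
    have hwn : ‖wa‖ = ‖w‖ := by
      rw [EuclideanSpace.norm_eq, EuclideanSpace.norm_eq]
      congr 1
      exact Finset.sum_congr rfl fun j _ => by simp [hwa]
    calc ∑ j, |β j| * |w j| = ⟪βa, wa⟫ := by rw [hinner]
    _ ≤ ‖βa‖ * ‖wa‖ := real_inner_le_norm βa wa
    _ = ‖β‖ * ‖w‖ := by rw [hβn, hwn]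
  calc ∑ j, β j * v j - lam * ∑ j, |β j| ≤ ∑ j, |β j| * |w j| := step1
  _ ≤ ‖β‖ * ‖w‖ := step2
  _ = ‖w‖ := by rw [hβ, one_mul]
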